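/- Let X be a Baire topological group with identity e, and A ⊆ X a non-meager F_σ subset such that X = C·A for some countable set C ⊆ X. Then A·A⁻¹ is a neighborhood of e. -/

import Mathlib

open Pointwise

theorem pettis_step {X : Type*} [Group X] [TopologicalSpace X] [IsTopologicalGroup X]
    [BaireSpace X] (A : Set X) (hmeagre : ¬ IsMeagre A)
    (hFσ : ∃ F : ℕ → Set X, (∀ n, IsClosed (F n)) ∧ A = ⋃ n, F n)
    (hcover : ∃ C : Set X, C.Countable ∧ C * A = Set.univ) :
    A * A⁻¹ ∈ nhds (1 : X) := by
  obtain ⟨F, hclosed, rfl⟩ := hFσ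
  -- some F n is non-meagre
  have : ∃ n, ¬ IsMeagre (F n) := by
    by_contra h
    push_neg at h
    exact hmeagre (isMeagre_iUnion h)
  obtain ⟨n, hn⟩ := this
  -- its interior is nonempty
  have hint : (interior (F n)).Nonempty := by
    rw [Set.nonempty_iff_ne_empty]
    intro h
    exact hn ((isMeagre_iff_countable_union_isNowhereDense).2
      ⟨{F n}, by
        rintro t rfl
        exact ((hclosed n).isNowhereDense_iff).2 h,
        Set.countable_singleton _, by simp⟩)
  obtain ⟨x, hx⟩ := hint
  have hsub : interior (F n) * {x}⁻¹ ⊆ (⋃ m, F m) * (⋃ m, F m)⁻¹ := by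
    apply Set.mul_subset_mul
    · exact interior_subset.trans (Set.subset_iUnion F n)
    · exact Set.inv_subset_inv.2 <| (Set.singleton_subset_iff.2
        (interior_subset hx)).trans (Set.subset_iUnion F n)
  refine Filter.mem_of_superset ?_ hsub
  have hopen : IsOpen (interior (F n) * {x}⁻¹) :=
    (isOpen_interior).mul_right
  exact hopen.mem_nhds ⟨x, hx, x⁻¹, by simp, by simp⟩
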